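/- Let a > 0 and 0 < S_min ≤ S_max (allowing S_max = ∞) be real numbers such that for all x ∈ [S_min, S_max], one has (|a − arcsinh(x)| / (√(1+x²)·(√(1+x²) − 1)²)) · max{1, x, 2x(√(1+x²) − 1)} < α₀. Then for every g ∈ (0,1) and every real L with S_min ≤ L + a·g ≤ S_max, the starter S̃ = L + a·g is an approximate zero of f_{g,L}. -/

import Mathlib

noncomputable section

/-- The hyperbolic Kepler function `f_{g,L}(S) = S - g·arcsinh(S) - L`. -/
def fhk (g L : ℝ) : ℝ → ℝ := fun S => S - g * Real.arsinh S - L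

/-- `β(f,z) = |f(z)/f'(z)|`. -/
def betaFn (f : ℝ → ℝ) (z : ℝ) : ℝ := |f z / deriv f z|

/-- `γ(f,z) = sup_{k ≥ 2} |f^{(k)}(z)/(k!·f'(z))|^{1/(k-1)}`. -/
def gammaFn (f : ℝ → ℝ) (z : ℝ) : ℝ :=
  sSup {y : ℝ | ∃ k : ℕ, 2 ≤ k ∧
    y = |iteratedDeriv k f z / (Nat.factorial k * deriv f z)| ^ ((1 : ℝ) / ((k : ℝ) - 1))}

/-- `α(f,z) = β(f,z)·γ(f,z)`. -/
def alphaFn (f : ℝ → ℝ) (z : ℝ) : ℝ := betaFn f z * gammaFn f z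

/-- Smale's constant (improved by Wang–Han): `α₀ = 3 - 2√2`. -/
def alpha0 : ℝ := 3 - 2 * Real.sqrt 2

/-- `z` is an approximate zero of `f` when `α(f,z) < α₀`. -/
def ApproxZero (f : ℝ → ℝ) (z : ℝ) : Prop := alphaFn f z < alpha0

section Aux

namespace HypKep
open Finset Complex Real


private lemma hrefl (f : ℕ → ℕ) (m : ℕ) :
    ∑ j ∈ range (m+1), f (m - j) = ∑ j ∈ range (m+1), f j := by
  simpa using Finset.sum_range_reflect f (m+1)

private lemma twoU (m : ℕ) :
    2 * ∑ j ∈ range (m+1), j * (Nat.centralBinom j * Nat.centralBinom (m - j))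
      = m * ∑ j ∈ range (m+1), Nat.centralBinom j * Nat.centralBinom (m - j) := by
  set b := Nat.centralBinom
  have h2 : ∑ j ∈ range (m+1), j * (b j * b (m - j))
      = ∑ j ∈ range (m+1), (m - j) * (b (m - j) * b j) := by
    rw [← hrefl (fun j => j * (b j * b (m - j))) m]
    apply Finset.sum_congr rfl
    intro j hj
    have hjm : j ≤ m := by simpa [Nat.lt_succ_iff] using hj
    have : m - (m - j) = j := by omega
    rw [this]
  rw [two_mul]
  nth_rewrite 2 [h2]
  rw [Finset.mul_sum, ← Finset.sum_add_distrib]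
  apply Finset.sum_congr rfl
  intro j hj
  have hjm : j ≤ m := by simpa [Nat.lt_succ_iff] using hj
  have hc : j + (m - j) = m := by omega
  calc j * (b j * b (m - j)) + (m - j) * (b (m - j) * b j)
      = (j + (m - j)) * (b j * b (m - j)) := by ring
    _ = m * (b j * b (m - j)) := by rw [hc]

lemma centralBinom_conv (n : ℕ) :
    ∑ j ∈ Finset.range (n+1), Nat.centralBinom j * Nat.centralBinom (n - j) = 4 ^ n := by
  induction n with
  | zero => simp [Nat.centralBinom]
  | succ n ih =>
    set b := Nat.centralBinom with hb
    have key : (n+1) * ∑ j ∈ range (n+2), b j * b (n+1-j)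
        = (n+1) * (4 * ∑ j ∈ range (n+1), b j * b (n - j)) := by
      have h1 := twoU (n+1)
      -- T = ∑_{j∈range(n+2)} j * (b j * b (n+1-j))
      have hT : ∑ j ∈ range (n+2), j * (b j * b (n+1-j))
          = ∑ i ∈ range (n+1), (2 * (2*i+1)) * (b i * b (n - i)) := by
        rw [Finset.sum_range_succ' (fun j => j * (b j * b (n+1-j))) (n+1)]
        simp only [Nat.zero_mul, add_zero, zero_mul]
        apply Finset.sum_congr rfl
        intro i hi
        have : n + 1 - (i + 1) = n - i := by omega
        rw [this]
        have hrec := Nat.succ_mul_centralBinom_succ i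
        calc (i+1) * (b (i+1) * b (n-i)) = ((i+1) * b (i+1)) * b (n-i) := by ring
          _ = (2 * (2*i+1) * b i) * b (n-i) := by rw [hrec]
          _ = (2 * (2*i+1)) * (b i * b (n-i)) := by ring
      have h2T : (n+1) * ∑ j ∈ range (n+2), b j * b (n+1-j)
          = 2 * ∑ j ∈ range (n+2), j * (b j * b (n+1-j)) := by
        rw [h1]
      rw [h2T, hT]
      have expand : ∑ i ∈ range (n+1), (2 * (2*i+1)) * (b i * b (n - i))
          = 4 * ∑ i ∈ range (n+1), i * (b i * b (n-i))
            + 2 * ∑ i ∈ range (n+1), b i * b (n-i) := by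
        rw [Finset.mul_sum, Finset.mul_sum, ← Finset.sum_add_distrib]
        apply Finset.sum_congr rfl
        intro i _
        ring
      rw [expand]
      have h2U := twoU n
      calc 2 * (4 * ∑ i ∈ range (n+1), i * (b i * b (n-i))
            + 2 * ∑ i ∈ range (n+1), b i * b (n-i))
          = 4 * (2 * ∑ i ∈ range (n+1), i * (b i * b (n-i)))
            + 4 * ∑ i ∈ range (n+1), b i * b (n-i) := by ring
        _ = 4 * (n * ∑ i ∈ range (n+1), b i * b (n-i))
            + 4 * ∑ i ∈ range (n+1), b i * b (n-i) := by rw [h2U]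
        _ = (n+1) * (4 * ∑ i ∈ range (n+1), b i * b (n - i)) := by ring
    have := Nat.eq_of_mul_eq_mul_left (Nat.succ_pos n) key
    rw [this, ih]
    ring



/-- `W w₀ c x = (x + w₀)^c` as a function `ℝ → ℂ`. -/
def W (w₀ c : ℂ) : ℝ → ℂ := fun x => ((x : ℂ) + w₀) ^ c

lemma hasDerivAt_W (w₀ c : ℂ) (hw : w₀.im ≠ 0) (x : ℝ) :
    HasDerivAt (W w₀ c) (c * ((x : ℂ) + w₀) ^ (c - 1)) x := by
  have h0 : ((x : ℂ) + w₀) ∈ Complex.slitPlane := by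
    rw [Complex.mem_slitPlane_iff]
    right
    simpa using hw
  have houter : HasDerivAt (fun z : ℂ => (z + w₀) ^ c)
      (c * ((x : ℂ) + w₀) ^ (c - 1)) (x : ℂ) := by
    have hin : HasDerivAt (fun z : ℂ => z + w₀) 1 (x : ℂ) :=
      (hasDerivAt_id _).add_const w₀
    have hout := (Complex.hasStrictDerivAt_cpow_const (c := c) h0).hasDerivAt
    simpa [Function.comp_def] using hout.comp (x : ℂ) hin
  exact houter.comp_ofReal

lemma differentiable_W (w₀ c : ℂ) (hw : w₀.im ≠ 0) : Differentiable ℝ (W w₀ c) :=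
  fun x => (hasDerivAt_W w₀ c hw x).differentiableAt

lemma deriv_W (w₀ c : ℂ) (hw : w₀.im ≠ 0) :
    deriv (W w₀ c) = fun x => c • W w₀ (c - 1) x := by
  funext x
  exact (hasDerivAt_W w₀ c hw x).deriv

lemma contDiff_W (w₀ : ℂ) (hw : w₀.im ≠ 0) (n : ℕ) (c : ℂ) : ContDiff ℝ n (W w₀ c) := by
  induction n generalizing c with
  | zero => exact contDiff_zero.mpr (differentiable_W w₀ c hw).continuous
  | succ n ih =>
    rw [show ((n + 1 : ℕ) : WithTop ℕ∞) = (n : WithTop ℕ∞) + 1 by push_cast; ring,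
      contDiff_succ_iff_deriv]
    refine ⟨differentiable_W w₀ c hw, ?_, ?_⟩
    · intro h
      exact absurd h (by exact_mod_cast WithTop.natCast_ne_top n)
    · rw [deriv_W w₀ c hw]
      exact (ih (c - 1)).const_smul c

lemma iteratedDeriv_W (w₀ : ℂ) (hw : w₀.im ≠ 0) (n : ℕ) (c : ℂ) :
    iteratedDeriv n (W w₀ c) = fun x =>
      (∏ m ∈ range n, (c - m)) • W w₀ (c - n) x := by
  induction n generalizing c with
  | zero => funext x; simp [W]
  | succ n ih =>
    funext x
    rw [iteratedDeriv_succ', deriv_W w₀ c hw]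
    have hsm : iteratedDeriv n (fun y => c • W w₀ (c-1) y) x
        = c • iteratedDeriv n (W w₀ (c-1)) x := by
      rw [← iteratedDerivWithin_univ, ← iteratedDerivWithin_univ]
      exact iteratedDerivWithin_const_smul (Set.mem_univ x) uniqueDiffOn_univ c
        ((contDiff_W w₀ hw n (c-1)).contDiffWithinAt)
    rw [hsm, ih (c - 1)]
    have h1 : (∏ m ∈ range n, (c - 1 - (m:ℂ))) = ∏ m ∈ range n, (c - (m+1 : ℕ)) := by
      apply Finset.prod_congr rfl
      intro m _
      push_cast
      ring
    have h2 : c - 1 - (n:ℂ) = c - ((n+1 : ℕ) : ℂ) := by push_cast; ring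
    rw [smul_smul, h1, h2, Finset.prod_range_succ' (fun m => c - (m:ℂ)) n]
    congr 1
    push_cast
    ring



/-- `C n = centralBinom n / 4^n`. -/
def CB (n : ℕ) : ℝ := (Nat.centralBinom n : ℝ) / 4 ^ n

lemma CB_pos (n : ℕ) : 0 < CB n := by
  have := Nat.centralBinom_pos n
  unfold CB
  positivity

lemma prod_half (n : ℕ) : ∏ m ∈ range n, ((m : ℝ) + 1/2) = (n.factorial : ℝ) * CB n := by
  induction n with
  | zero => simp [CB, Nat.centralBinom]
  | succ n ih =>
    rw [Finset.prod_range_succ, ih]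
    have key : ((n:ℝ) + 1) * (Nat.centralBinom (n+1) : ℝ)
        = 2 * (2 * n + 1) * (Nat.centralBinom n : ℝ) := by
      exact_mod_cast congrArg (Nat.cast : ℕ → ℝ) (Nat.succ_mul_centralBinom_succ n)
    unfold CB
    have h4 : (4:ℝ) ^ (n+1) = 4 * 4 ^ n := by ring
    rw [Nat.factorial_succ, h4]
    push_cast
    have hcb : (Nat.centralBinom (n+1) : ℝ)
        = 2 * (2 * n + 1) * (Nat.centralBinom n : ℝ) / ((n:ℝ) + 1) := by
      field_simp
      linarith [key]
    rw [hcb]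
    field_simp
    ring

def c₀ : ℂ := -(1/2)

lemma norm_prod_c₀ (n : ℕ) : ‖∏ m ∈ range n, (c₀ - m)‖ = (n.factorial : ℝ) * CB n := by
  rw [norm_prod, ← prod_half n]
  apply Finset.prod_congr rfl
  intro m _
  have : c₀ - (m:ℂ) = (((-(1/2) - m : ℝ)) : ℂ) := by unfold c₀; push_cast; ring
  rw [this, Complex.norm_real]
  rw [Real.norm_eq_abs, abs_of_nonpos (by have := Nat.cast_nonneg (α := ℝ) m; linarith)]
  ring



lemma sqrt1x_pos (x : ℝ) : 0 < Real.sqrt (1 + x^2) := Real.sqrt_pos.2 (by positivity)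

lemma norm_W_rpow (w₀ : ℂ) (hw : w₀.im ≠ 0) (r x : ℝ) :
    ‖W w₀ ((r : ℝ) : ℂ) x‖ = ‖(x:ℂ) + w₀‖ ^ r := by
  have hz : ((x:ℂ) + w₀) ≠ 0 := by
    intro h
    exact hw (by simpa using congrArg Complex.im h)
  unfold W
  rw [Complex.norm_cpow_of_ne_zero hz]
  simp

lemma abs_xI (x : ℝ) : ‖(x:ℂ) + Complex.I‖ = Real.sqrt (1 + x^2) := by
  rw [Complex.norm_def]
  congr 1
  simp [Complex.normSq_apply]
  ring

lemma abs_xI' (x : ℝ) : ‖(x:ℂ) + -Complex.I‖ = Real.sqrt (1 + x^2) := by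
  rw [Complex.norm_def]
  congr 1
  simp [Complex.normSq_apply]
  ring

lemma c₀_eq : c₀ = ((-(1/2) : ℝ) : ℂ) := by unfold c₀; push_cast; ring

lemma c₀_sub_nat (n : ℕ) : c₀ - (n : ℂ) = ((-(1/2) - n : ℝ) : ℂ) := by
  rw [c₀_eq]; push_cast; ring

lemma norm_iteratedDeriv_W (w₀ : ℂ) (hw : w₀.im ≠ 0) (n : ℕ) (x : ℝ) :
    ‖iteratedDeriv n (W w₀ c₀) x‖
      = (n.factorial : ℝ) * CB n * ‖(x:ℂ) + w₀‖ ^ (-(1/2) - (n:ℝ)) := by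
  have := congrFun (iteratedDeriv_W w₀ hw n c₀) x
  rw [this, norm_smul, norm_prod_c₀, c₀_sub_nat, norm_W_rpow w₀ hw _ x]



def hfun : ℝ → ℝ := fun x => (Real.sqrt (1 + x^2))⁻¹

lemma contDiff_hfun (n : ℕ) : ContDiff ℝ n hfun := by
  have h1 : ContDiff ℝ n (fun x : ℝ => 1 + x^2) := contDiff_const.add (contDiff_id.pow 2)
  have h2 : ContDiff ℝ n (fun x : ℝ => Real.sqrt (1 + x^2)) :=
    h1.sqrt (fun x => by positivity)
  exact h2.inv (fun x => (sqrt1x_pos x).ne')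

lemma conj_c₀ : (starRingEnd ℂ) c₀ = c₀ := by
  rw [c₀_eq, Complex.conj_ofReal]

lemma W_mul_W (x : ℝ) : W Complex.I c₀ x * W (-Complex.I) c₀ x = ((hfun x : ℝ) : ℂ) := by
  set z : ℂ := (x:ℂ) + Complex.I with hzdef
  have hconj : ((x:ℂ) + -Complex.I) = (starRingEnd ℂ) z := by
    rw [hzdef, map_add, Complex.conj_ofReal, Complex.conj_I]
  have harg : z.arg ≠ Real.pi := by
    intro h
    rw [Complex.arg_eq_pi_iff] at h
    simp [hzdef] at h
  have hW2 : W (-Complex.I) c₀ x = (starRingEnd ℂ) (z ^ c₀) := by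
    unfold W
    rw [hconj, Complex.conj_cpow _ _ harg, conj_c₀]
  have hW1 : W Complex.I c₀ x = z ^ c₀ := rfl
  rw [hW1, hW2, Complex.mul_conj]
  have habs : ‖z ^ c₀‖ = Real.sqrt (1 + x^2) ^ (-(1/2) : ℝ) := by
    have := norm_W_rpow Complex.I (by simp) (-(1/2)) x
    rw [c₀_eq]
    rw [show (z ^ (((-(1/2):ℝ)):ℂ)) = W Complex.I (((-(1/2):ℝ)):ℂ) x from rfl, this, abs_xI]
  rw [Complex.normSq_eq_norm_sq, habs]
  have hs := (sqrt1x_pos x).le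
  have : (Real.sqrt (1 + x^2) ^ (-(1/2) : ℝ)) ^ 2 = (Real.sqrt (1 + x^2))⁻¹ := by
    rw [← Real.rpow_natCast (Real.sqrt (1 + x^2) ^ (-(1/2) : ℝ)) 2, ← Real.rpow_mul hs]
    norm_num [Real.rpow_neg_one]
  rw [this]
  rfl

lemma CB_conv (n : ℕ) : ∑ i ∈ Finset.range (n+1), CB i * CB (n - i) = 1 := by
  have key := centralBinom_conv n
  have : ∑ i ∈ Finset.range (n+1), CB i * CB (n - i)
      = (∑ i ∈ Finset.range (n+1),
          (Nat.centralBinom i * Nat.centralBinom (n - i) : ℕ)) / (4:ℝ)^n := by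
    push_cast
    rw [Finset.sum_div]
    apply Finset.sum_congr rfl
    intro i hi
    have hin : i ≤ n := by simpa [Nat.lt_succ_iff] using hi
    unfold CB
    have h4 : (4:ℝ)^i * (4:ℝ)^(n-i) = (4:ℝ)^n := by
      rw [← pow_add]
      congr 1
      omega
    push_cast
    rw [div_mul_div_comm, h4]
  rw [this, key]
  push_cast
  field_simp

lemma ofReal_iteratedDeriv (f : ℝ → ℝ) (hf : ∀ n : ℕ, ContDiff ℝ n f) (n : ℕ) :
    iteratedDeriv n (fun y : ℝ => ((f y : ℝ) : ℂ)) = fun x => ((iteratedDeriv n f x : ℝ) : ℂ) := by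
  induction n with
  | zero => simp
  | succ n ih =>
    funext x
    rw [iteratedDeriv_succ, ih, iteratedDeriv_succ]
    have hdiff : DifferentiableAt ℝ (iteratedDeriv n f) x := by
      have := (hf (n+1)).differentiable_iteratedDeriv n (by exact_mod_cast Nat.lt_succ_self n)
      exact this x
    exact (hdiff.hasDerivAt.ofReal_comp).deriv



lemma iteratedDeriv_hfun_bound (n : ℕ) (x : ℝ) :
    |iteratedDeriv n hfun x| ≤ (n.factorial : ℝ) / Real.sqrt (1 + x^2) ^ (n+1) := by
  set s := Real.sqrt (1 + x^2) with hs
  have hspos := sqrt1x_pos x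
  -- step 1: express as complex norm
  have h1 : |iteratedDeriv n hfun x|
      = ‖iteratedDeriv n (fun y : ℝ => ((hfun y : ℝ) : ℂ)) x‖ := by
    rw [ofReal_iteratedDeriv hfun contDiff_hfun n]
    rw [Complex.norm_real, Real.norm_eq_abs]
  have h2 : (fun y : ℝ => ((hfun y : ℝ) : ℂ))
      = fun y => W Complex.I c₀ y * W (-Complex.I) c₀ y := by
    funext y
    exact (W_mul_W y).symm
  rw [h1, h2]
  -- step 2: Leibniz bound
  rw [← norm_iteratedFDeriv_eq_norm_iteratedDeriv]
  have hmul := norm_iteratedFDeriv_mul_le (𝕜 := ℝ)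
    (contDiff_W Complex.I (by simp) n c₀) (contDiff_W (-Complex.I) (by simp) n c₀) x
    (le_refl (n : WithTop ℕ∞))
  refine le_trans hmul ?_
  -- step 3: compute the sum
  have hterm : ∀ i ∈ Finset.range (n+1),
      (n.choose i : ℝ) * ‖iteratedFDeriv ℝ i (W Complex.I c₀) x‖
        * ‖iteratedFDeriv ℝ (n-i) (W (-Complex.I) c₀) x‖
      = (n.factorial : ℝ) * (CB i * CB (n-i)) * s ^ (-(1:ℝ) - n) := by
    intro i hi
    have hin : i ≤ n := by simpa [Nat.lt_succ_iff] using hi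
    rw [norm_iteratedFDeriv_eq_norm_iteratedDeriv, norm_iteratedFDeriv_eq_norm_iteratedDeriv,
      norm_iteratedDeriv_W Complex.I (by simp) i x,
      norm_iteratedDeriv_W (-Complex.I) (by simp) (n-i) x, abs_xI, abs_xI']
    rw [← hs]
    have hre : s ^ (-(1/2) - (i:ℝ)) * s ^ (-(1/2) - ((n-i : ℕ):ℝ)) = s ^ (-(1:ℝ) - n) := by
      rw [← Real.rpow_add hspos]
      congr 1
      have : ((n - i : ℕ) : ℝ) = (n : ℝ) - i := by
        rw [Nat.cast_sub hin]
      rw [this]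
      ring
    have hfact : (n.choose i : ℝ) * (i.factorial : ℝ) * ((n-i).factorial : ℝ)
        = (n.factorial : ℝ) := by
      exact_mod_cast congrArg (Nat.cast : ℕ → ℝ)
        (Nat.choose_mul_factorial_mul_factorial hin)
    calc (n.choose i : ℝ) * ((i.factorial : ℝ) * CB i * s ^ (-(1/2) - (i:ℝ)))
          * ((((n-i).factorial : ℝ)) * CB (n-i) * s ^ (-(1/2) - ((n-i:ℕ):ℝ)))
        = ((n.choose i : ℝ) * (i.factorial : ℝ) * ((n-i).factorial : ℝ))
          * (CB i * CB (n-i)) * (s ^ (-(1/2) - (i:ℝ)) * s ^ (-(1/2) - ((n-i:ℕ):ℝ))) := by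
          ring
      _ = (n.factorial : ℝ) * (CB i * CB (n-i)) * s ^ (-(1:ℝ) - n) := by
          rw [hfact, hre]
  rw [Finset.sum_congr rfl hterm, ← Finset.sum_mul, ← Finset.mul_sum, CB_conv, mul_one]
  have : s ^ (-(1:ℝ) - n) = (s ^ (n+1))⁻¹ := by
    rw [show (-(1:ℝ) - n) = -(((n+1 : ℕ)):ℝ) by push_cast; ring,
      Real.rpow_neg hspos.le, Real.rpow_natCast]
  rw [this, div_eq_mul_inv]




lemma hasDerivAt_fhk (g L x : ℝ) :
    HasDerivAt (fhk g L) (1 - g * hfun x) x := by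
  have h1 : HasDerivAt (fun S : ℝ => S - g * Real.arsinh S - L)
      (1 - g * (Real.sqrt (1 + x^2))⁻¹) x := by
    exact (((hasDerivAt_id x).sub ((Real.hasDerivAt_arsinh x).const_mul g)).sub_const L)
  exact h1

lemma deriv_fhk (g L : ℝ) : deriv (fhk g L) = fun x => 1 - g * hfun x := by
  funext x
  exact (hasDerivAt_fhk g L x).deriv

lemma iteratedDeriv_fhk (g L : ℝ) (m : ℕ) (x : ℝ) :
    iteratedDeriv (m + 2) (fhk g L) x = -(g * iteratedDeriv (m+1) hfun x) := by
  have : (m + 2) = (m + 1) + 1 := rfl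
  rw [this, iteratedDeriv_succ', deriv_fhk]
  have e1 : (fun y : ℝ => 1 - g * hfun y) = (fun y : ℝ => 1 + (fun z : ℝ => -(g * hfun z)) y) := by
    funext y; ring
  rw [e1, ← iteratedDerivWithin_univ,
    iteratedDerivWithin_const_add (Nat.succ_pos m),
    iteratedDerivWithin_fun_neg,
    iteratedDerivWithin_const_mul (Set.mem_univ x) uniqueDiffOn_univ g
      ((contDiff_hfun (m+1)).contDiffWithinAt), iteratedDerivWithin_univ]




lemma gamma_le (g L X : ℝ) (hg0 : 0 < g) (hgs : g < Real.sqrt (1+X^2)) :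
    gammaFn (fhk g L) X
      ≤ max 1 (g/(2*(Real.sqrt (1+X^2) - g))) * (Real.sqrt (1+X^2))⁻¹ := by
  set s := Real.sqrt (1+X^2) with hsdef
  have hspos : 0 < s := sqrt1x_pos X
  have hd : 0 < s - g := by linarith
  have hBnn : 0 ≤ max 1 (g/(2*(s - g))) * s⁻¹ :=
    mul_nonneg (le_trans zero_le_one (le_max_left _ _)) (inv_nonneg.2 hspos.le)
  apply Real.sSup_le _ hBnn
  rintro y ⟨k, hk2, rfl⟩
  obtain ⟨m, rfl⟩ : ∃ m, k = m + 2 := by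
    obtain ⟨m, hm⟩ := Nat.exists_eq_add_of_le hk2
    exact ⟨m, by omega⟩
  have hderiv : deriv (fhk g L) X = (s - g)/s := by
    rw [deriv_fhk]
    show 1 - g * hfun X = (s - g)/s
    unfold hfun
    rw [← hsdef]
    field_simp
  -- numerator bound
  have hnum : |iteratedDeriv (m+2) (fhk g L) X| ≤ g * (((m+1).factorial : ℝ) / s^(m+2)) := by
    rw [iteratedDeriv_fhk, abs_neg, abs_mul, abs_of_pos hg0]
    have := iteratedDeriv_hfun_bound (m+1) X
    rw [← hsdef] at this
    have h2 : (m+1) + 1 = m + 2 := rfl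
    rw [h2] at this
    exact mul_le_mul_of_nonneg_left this hg0.le
  -- the quotient
  have hden : |((((m+2).factorial : ℕ) : ℝ)) * deriv (fhk g L) X|
      = (((m+2).factorial : ℝ)) * ((s - g)/s) := by
    rw [hderiv, abs_mul, abs_of_pos (by positivity : (0:ℝ) < (((m+2).factorial : ℝ))),
      abs_of_pos (by positivity)]
  set c : ℝ := g / (((m:ℝ)+2) * (s - g)) with hcdef
  have hcpos : 0 < c := by positivity
  have ht : |iteratedDeriv (m+2) (fhk g L) X / ((((m+2).factorial : ℕ) : ℝ) * deriv (fhk g L) X)|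
      ≤ c * (s⁻¹)^(m+1) := by
    rw [abs_div, hden]
    have hfact2 : (((m+2).factorial : ℝ)) = ((m:ℝ)+2) * (((m+1).factorial : ℝ)) := by
      have : (m+2).factorial = (m+2) * (m+1).factorial := rfl
      rw [this]
      push_cast
      ring
    have hstep : g * (((m+1).factorial : ℝ) / s^(m+2))
        / ((((m+2).factorial : ℝ)) * ((s - g)/s)) = c * (s⁻¹)^(m+1) := by
      rw [hfact2, hcdef]
      have hsp : s ^ (m+2) = s^(m+1) * s := by ring
      rw [hsp]
      have hf1 : (0:ℝ) < ((m+1).factorial : ℝ) := by positivity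
      field_simp
      rw [← mul_pow, mul_one_div_cancel hspos.ne', one_pow]
    rw [← hstep]
    apply div_le_div_of_nonneg_right hnum (by positivity)
  -- rpow step
  have hexp : ((((m+2):ℕ)  : ℝ) - 1) = (((m+1):ℕ) : ℝ) := by push_cast; ring
  rw [hexp]
  have hy : |iteratedDeriv (m+2) (fhk g L) X / ((((m+2).factorial : ℕ) : ℝ) * deriv (fhk g L) X)|
        ^ ((1:ℝ) / (((m+1):ℕ) : ℝ))
      ≤ (c * (s⁻¹)^(m+1)) ^ ((1:ℝ) / (((m+1):ℕ) : ℝ)) :=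
    Real.rpow_le_rpow (abs_nonneg _) ht (by positivity)
  refine le_trans hy ?_
  have hsplit : (c * (s⁻¹)^(m+1)) ^ ((1:ℝ) / (((m+1):ℕ) : ℝ))
      = c ^ ((1:ℝ) / (((m+1):ℕ) : ℝ)) * s⁻¹ := by
    rw [Real.mul_rpow hcpos.le (by positivity)]
    congr 1
    rw [← Real.rpow_natCast s⁻¹ (m+1), ← Real.rpow_mul (by positivity)]
    rw [show (((m+1):ℕ) : ℝ) * ((1:ℝ) / (((m+1):ℕ) : ℝ)) = 1 by
      field_simp]
    exact Real.rpow_one _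
  rw [hsplit]
  have hcmax : c ^ ((1:ℝ) / (((m+1):ℕ) : ℝ)) ≤ max 1 (g/(2*(s - g))) := by
    rcases le_total c 1 with hc1 | hc1
    · exact le_trans (Real.rpow_le_one hcpos.le hc1 (by positivity)) (le_max_left _ _)
    · have h1 : c ^ ((1:ℝ) / (((m+1):ℕ) : ℝ)) ≤ c ^ (1:ℝ) := by
        apply Real.rpow_le_rpow_of_exponent_le hc1
        rw [div_le_one (by positivity)]
        exact_mod_cast Nat.one_le_iff_ne_zero.2 (Nat.succ_ne_zero m)
      rw [Real.rpow_one] at h1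
      refine le_trans h1 (le_trans ?_ (le_max_right _ _))
      rw [hcdef]
      apply div_le_div_of_nonneg_left hg0.le (by positivity)
      nlinarith
  exact mul_le_mul_of_nonneg_right hcmax (by positivity)





set_option maxHeartbeats 2000000 in
theorem main_thm (a Smin : ℝ) (Smax : EReal)
    (ha : 0 < a) (hmin : 0 < Smin) (hminmax : (Smin : EReal) ≤ Smax)
    (hineq : ∀ x : ℝ, Smin ≤ x → (x : EReal) ≤ Smax →
      |a - Real.arsinh x| /
          (Real.sqrt (1 + x ^ 2) * (Real.sqrt (1 + x ^ 2) - 1) ^ 2) *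
          max 1 (max x (2 * x * (Real.sqrt (1 + x ^ 2) - 1))) < alpha0)
    (g L : ℝ) (hg0 : 0 < g) (hg1 : g < 1)
    (h1 : Smin ≤ L + a * g) (h2 : ((L + a * g : ℝ) : EReal) ≤ Smax) :
    ApproxZero (fhk g L) (L + a * g) := by
  set X := L + a * g with hXdef
  set s := Real.sqrt (1 + X^2) with hsdef
  set A := |a - Real.arsinh X| with hAdef
  have hXpos : 0 < X := lt_of_lt_of_le hmin h1
  have hspos : 0 < s := sqrt1x_pos X
  have hs2 : s^2 = 1 + X^2 := Real.sq_sqrt (by positivity)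
  have hs1 : 1 < s := by nlinarith
  have hgs : g < s := lt_trans hg1 hs1
  have hd : 0 < s - g := by linarith
  have he : 0 < s - 1 := by linarith
  have hXs : X ≤ s := by nlinarith
  have hs1X : s ≤ 1 + X := by nlinarith
  set M := max 1 (max X (2 * X * (s - 1))) with hMdef
  have hM1 : (1:ℝ) ≤ M := le_max_left _ _
  have hMX : X ≤ M := le_trans (le_max_left _ _) (le_max_right _ _)
  have hM2 : 2 * X * (s - 1) ≤ M := le_trans (le_max_right _ _) (le_max_right _ _)
  have hkey := hineq X h1 h2
  rw [← hsdef, ← hAdef, ← hMdef] at hkey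
  -- beta value
  have hderiv : deriv (fhk g L) X = (s - g)/s := by
    rw [deriv_fhk]
    show 1 - g * hfun X = (s - g)/s
    unfold hfun
    rw [← hsdef]
    field_simp
  have hfval : fhk g L X = g * (a - Real.arsinh X) := by
    show X - g * Real.arsinh X - L = g * (a - Real.arsinh X)
    rw [hXdef]
    ring
  have hbeta : betaFn (fhk g L) X = g * A * s / (s - g) := by
    rw [betaFn, hfval, hderiv, abs_div, abs_mul, abs_of_pos hg0,
      abs_of_pos (by positivity : (0:ℝ) < (s-g)/s), ← hAdef]
    field_simp
  -- gamma bound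
  have hgamma := gamma_le g L X hg0 (by rw [← hsdef]; exact hgs)
  rw [← hsdef] at hgamma
  have hbnn : 0 ≤ betaFn (fhk g L) X := abs_nonneg _
  have halpha : alphaFn (fhk g L) X
      ≤ (g * A * s / (s - g)) * (max 1 (g/(2*(s - g))) * s⁻¹) := by
    rw [alphaFn, hbeta]
    rw [hbeta] at hbnn
    exact mul_le_mul_of_nonneg_left hgamma hbnn
  -- final numeric inequality
  have hAnn : 0 ≤ A := abs_nonneg _
  have hfinal : (g * A * s / (s - g)) * (max 1 (g/(2*(s - g))) * s⁻¹)
      ≤ A / (s * (s-1)^2) * M := by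
    have hLHS : (g * A * s / (s - g)) * (max 1 (g/(2*(s - g))) * s⁻¹)
        = A * g * max 1 (g/(2*(s - g))) / (s - g) := by
      field_simp
    rw [hLHS]
    have key1 : s * (s - 1) ≤ M := by
      rcases le_total X 1 with hX1 | hX1
      · have hs2' : s^2 ≤ 2 := by nlinarith
        have hss : s * (s - 1) ≤ 1 := by nlinarith
        exact le_trans hss hM1
      · have h2X : 1 + X ≤ 2 * X := by linarith
        calc s * (s-1) ≤ (1 + X) * (s - 1) := by nlinarith
          _ ≤ 2 * X * (s-1) := by nlinarith
          _ ≤ M := hM2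
    have key2 : s ≤ 2 * M := by linarith
    have hRHS : A / (s * (s-1)^2) * M = A * M / (s * (s-1)^2) := by ring
    rw [hRHS]
    rcases le_total (g/(2*(s - g))) 1 with hc | hc
    · rw [max_eq_left hc, mul_one]
      rw [div_le_div_iff₀ (by positivity) (by positivity)]
      have hgd : g * (s - 1) ≤ s - g := by nlinarith
      -- A*g*1 * (s (s-1)^2) ≤ A*M*(s-g)
      have : A * g * (s * (s-1)^2) ≤ A * M * (s - g) := by
        calc A * g * (s * (s-1)^2) = (A * (s * (s-1))) * (g * (s-1)) := by ring
          _ ≤ (A * M) * (s - g) := by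
            apply mul_le_mul
            · exact mul_le_mul_of_nonneg_left key1 hAnn
            · exact hgd
            · positivity
            · positivity
      linarith [this]
    · rw [max_eq_right hc]
      rw [div_le_div_iff₀ (by positivity) (by positivity)]
      have hgd : g * (s - 1) ≤ s - g := by nlinarith
      -- A*g*(g/(2(s-g))) * (s (s-1)^2) ≤ A*M*(s-g)
      have expand : A * g * (g/(2*(s - g))) * (s * (s-1)^2)
          = (A * s * (g*(s-1)) * (g*(s-1))) / (2*(s-g)) := by
        field_simp
      rw [expand]
      rw [div_le_iff₀ (by positivity)]
      calc A * s * (g*(s-1)) * (g*(s-1)) ≤ A * s * (s - g) * (s - g) := by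
            apply mul_le_mul
            · apply mul_le_mul_of_nonneg_left hgd
              positivity
            · exact hgd
            · positivity
            · positivity
        _ ≤ A * M * (s - g) * (2 * (s-g)) := by nlinarith [mul_nonneg (mul_nonneg hAnn hd.le) hd.le, key2]
  have : alphaFn (fhk g L) X < alpha0 := lt_of_le_of_lt (le_trans halpha hfinal) hkey
  exact this


end HypKep

end Aux

/-- Theorem 2.5: let `a > 0` and `0 < S_min ≤ S_max` (with `S_max = ∞` allowed,
modelled in `EReal`) be such that
`(|a - arcsinh(x)|/(√(1+x²)(√(1+x²)-1)²))·max{1, x, 2x(√(1+x²)-1)} < α₀`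
for all `x ∈ [S_min, S_max]`.  Then for every `g ∈ (0,1)` and `L` with
`S_min ≤ L + a·g ≤ S_max`, the starter `S̃ = L + a·g` is an approximate zero
of `f_{g,L}`. -/
theorem linear_starter_is_approx_zero (a Smin : ℝ) (Smax : EReal)
    (ha : 0 < a) (hmin : 0 < Smin) (hminmax : (Smin : EReal) ≤ Smax)
    (hineq : ∀ x : ℝ, Smin ≤ x → (x : EReal) ≤ Smax →
      |a - Real.arsinh x| /
          (Real.sqrt (1 + x ^ 2) * (Real.sqrt (1 + x ^ 2) - 1) ^ 2) *
          max 1 (max x (2 * x * (Real.sqrt (1 + x ^ 2) - 1))) < alpha0)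
    (g L : ℝ) (hg0 : 0 < g) (hg1 : g < 1)
    (h1 : Smin ≤ L + a * g) (h2 : ((L + a * g : ℝ) : EReal) ≤ Smax) :
    ApproxZero (fhk g L) (L + a * g) :=
  HypKep.main_thm a Smin Smax ha hmin hminmax hineq g L hg0 hg1 h1 h2
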